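/- Let λ > 0, η > 0 with ηλ < 1, and ζ ∈ (0,1). Then both roots of the quadratic μ² - (1+ζ)(1-ηλ)μ + ζ(1-ηλ) = 0 have modulus strictly less than 1 (as complex numbers). -/

import Mathlib

/-- For `λ > 0` with `ηλ < 1` and `ζ ∈ (0,1)`, both complex roots of
`μ² - (1+ζ)(1-ηλ)μ + ζ(1-ηλ) = 0` have modulus strictly less than `1`. -/
theorem nag_roots_modulus_lt_one (l η ζ : ℝ)
    (hl : 0 < l) (hη : 0 < η) (hηl : η * l < 1)
    (hζ : ζ ∈ Set.Ioo (0 : ℝ) 1) :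
    ∀ μ : ℂ, μ ^ 2 - (((1 + ζ) * (1 - η * l) : ℝ) : ℂ) * μ
        + (((ζ * (1 - η * l) : ℝ)) : ℂ) = 0 → ‖μ‖ < 1 := by
  intro μ h
  obtain ⟨hζ0, hζ1⟩ := hζ
  have ht0 : 0 < 1 - η * l := by nlinarith
  have ht1 : 1 - η * l < 1 := by nlinarith
  have hre := congrArg Complex.re h
  have him := congrArg Complex.im h
  simp [Complex.ext_iff, pow_two, Complex.mul_re, Complex.mul_im] at hre him
  set a := μ.re with ha
  set b := μ.im with hb
  have hkey : a ^ 2 + b ^ 2 < 1 := by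
    rcases eq_or_ne b 0 with hb0 | hb0
    · rw [hb0] at hre ⊢
      simp only [mul_zero, zero_mul, add_zero, sub_zero] at hre
      -- real root: a*a - (1+ζ)(1-ηl)*a + ζ(1-ηl) = 0
      have hapos : 0 < a := by
        by_contra hc
        push_neg at hc
        nlinarith [mul_nonneg (by positivity : (0:ℝ) ≤ (1 + ζ) * (1 - η * l))
          (neg_nonneg.mpr hc), mul_self_nonneg a]
      have halt : a < 1 := by
        by_contra hc
        push_neg at hc
        nlinarith [sq_nonneg (a - 1),
          mul_nonneg (by nlinarith : (0:ℝ) ≤ 2 - (1 + ζ) * (1 - η * l))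
            (by linarith : (0:ℝ) ≤ a - 1)]
      nlinarith
    · -- imaginary part: 2ab - B b = 0 ⇒ a = B/2
      have hB : 2 * a = (1 + ζ) * (1 - η * l) := by
        have : b * (2 * a - (1 + ζ) * (1 - η * l)) = 0 := by ring_nf; nlinarith [him]
        rcases mul_eq_zero.mp this with h1 | h1
        · exact absurd h1 hb0
        · linarith
      have h2 : 2 * a * a = (1 + ζ) * (1 - η * l) * a := by rw [hB]
      nlinarith [hre, h2]
  have hsq := Complex.sq_norm μ
  rw [Complex.normSq_apply] at hsq
  nlinarith [norm_nonneg μ, hsq]
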